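/- For a trace-class operator k on ℓ²(ℕ) whose matrix entries (k_{mn}) satisfy ∑_{m,n}(1+m+n)^p |k_{mn}| < ∞ for all p ∈ ℕ (i.e., k is in the Schwartz class S(ℓ²(ℕ))), the function t ↦ Trace(k e^{-tN}) admits an asymptotic expansion near 0⁺ of the form ∑_{r=0}^∞ φ_r(k) t^r, where φ_r(k) = ((-1)^r / r!) ∑_{i=0}^∞ k_{ii} i^r and N is the number operator N e_i = i e_i. -/

import Mathlib

/-- Asymptotic expansion of `φ` at `0⁺` with coefficients `a`. -/
def HasAsympExp (φ : ℝ → ℂ) (a : ℕ → ℂ) : Prop :=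
  ∀ N : ℕ, ∃ ε > (0:ℝ), ∃ M : ℝ, ∀ t : ℝ, 0 < t → t < ε →
    ‖φ t - ∑ r ∈ Finset.range (N + 1), a r * (t : ℂ) ^ r‖ ≤ M * t ^ (N + 1)

lemma exp_neg_taylor_bound : ∀ (N : ℕ) (x : ℝ), 0 ≤ x →
    |Real.exp (-x) - ∑ r ∈ Finset.range (N+1), (-x)^r / r.factorial| ≤ x^(N+1) := by
  intro N
  induction N with
  | zero =>
    intro x hx
    have h1 : Real.exp (-x) ≤ 1 := by
      calc Real.exp (-x) ≤ Real.exp 0 := Real.exp_le_exp.mpr (by linarith)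
        _ = 1 := Real.exp_zero
    have h2 : 1 - x ≤ Real.exp (-x) := by
      have := Real.add_one_le_exp (-x); linarith
    rw [Finset.sum_range_one]
    norm_num
    rw [abs_le]
    constructor <;> linarith
  | succ N ih =>
    intro x hx
    set f : ℝ → ℝ := fun y => Real.exp (-y) - ∑ r ∈ Finset.range (N+2), (-y)^r / r.factorial with hf
    have hderiv : ∀ y : ℝ, HasDerivAt f
        (-(Real.exp (-y) - ∑ r ∈ Finset.range (N+1), (-y)^r / r.factorial)) y := by
      intro y
      have h1 : HasDerivAt (fun y : ℝ => Real.exp (-y)) (-Real.exp (-y)) y := by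
        simpa [Function.comp_def] using (Real.hasDerivAt_exp (-y)).comp y (hasDerivAt_neg y)
      have h2 : HasDerivAt (fun y : ℝ => ∑ r ∈ Finset.range (N+2), (-y)^r / r.factorial)
          (∑ r ∈ Finset.range (N+2), ((r : ℝ) * (-y)^(r-1) * (-1)) / r.factorial) y := by
        apply HasDerivAt.fun_sum
        intro r _
        have h := ((hasDerivAt_pow r (-y)).comp y (hasDerivAt_neg y)).div_const
          (r.factorial : ℝ)
        simpa using h
      have hsum : ∑ r ∈ Finset.range (N+2), ((r : ℝ) * (-y)^(r-1) * (-1)) / r.factorial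
          = -∑ r ∈ Finset.range (N+1), (-y)^r / r.factorial := by
        rw [Finset.sum_range_succ', ← Finset.sum_neg_distrib]
        simp only [Nat.cast_zero, zero_mul, zero_div, add_zero]
        apply Finset.sum_congr rfl
        intro r _
        have hfac : (((r+1).factorial : ℝ)) = (r+1) * r.factorial := by
          rw [Nat.factorial_succ]; push_cast; ring
        have hne : (r.factorial : ℝ) ≠ 0 := Nat.cast_ne_zero.mpr r.factorial_ne_zero
        rw [hfac]
        push_cast
        field_simp
      have := h1.sub h2
      rw [hsum] at this
      exact this.congr_deriv (by ring)
    have hbound : ∀ y ∈ Set.Icc (0:ℝ) x,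
        ‖-(Real.exp (-y) - ∑ r ∈ Finset.range (N+1), (-y)^r / r.factorial)‖ ≤ x^(N+1) := by
      intro y hy
      rw [norm_neg, Real.norm_eq_abs]
      calc |Real.exp (-y) - ∑ r ∈ Finset.range (N+1), (-y)^r / r.factorial|
          ≤ y^(N+1) := ih y hy.1
        _ ≤ x^(N+1) := pow_le_pow_left₀ hy.1 hy.2 _
    have hmvt := (convex_Icc (0:ℝ) x).norm_image_sub_le_of_norm_hasDerivWithin_le
      (fun y _ => (hderiv y).hasDerivWithinAt) hbound
      (Set.left_mem_Icc.mpr hx) (Set.right_mem_Icc.mpr hx)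
    have hf0 : f 0 = 0 := by
      simp [hf, Finset.sum_range_succ']
    rw [hf0, sub_zero, Real.norm_eq_abs, sub_zero, Real.norm_eq_abs, abs_of_nonneg hx] at hmvt
    calc |f x| ≤ x^(N+1) * x := hmvt
      _ = x^(N+2) := by ring

/-- For a Schwartz-class operator `k` on `ℓ²(ℕ)` (given by its matrix entries),
`t ↦ Trace(k e^{-tN}) = ∑ᵢ kᵢᵢ e^{-ti}` has the asymptotic expansion
`∑ᵣ φᵣ(k) tʳ` with `φᵣ(k) = ((-1)ʳ/r!) ∑ᵢ kᵢᵢ iʳ`. -/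
theorem schwartz_heat_trace_asymp_expansion
    (k : ℕ → ℕ → ℂ)
    (hk : ∀ p : ℕ, Summable (fun mn : ℕ × ℕ =>
      ((1 + mn.1 + mn.2 : ℝ)) ^ p * ‖k mn.1 mn.2‖)) :
    HasAsympExp (fun t : ℝ => ∑' i : ℕ, k i i * (Real.exp (-t * i) : ℂ))
      (fun r : ℕ => ((-1 : ℂ) ^ r / (r.factorial : ℂ)) * ∑' i : ℕ, k i i * (i : ℂ) ^ r) := by
  
  have hdiag : ∀ p : ℕ, Summable (fun i : ℕ => ‖k i i‖ * (i:ℝ)^p) := by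
    intro p
    have hinj : Function.Injective (fun i : ℕ => ((i, i) : ℕ × ℕ)) := by
      intro a b h; simpa using congrArg Prod.fst h
    have h1 : Summable (fun i : ℕ => ((1 + (i:ℝ) + i))^p * ‖k i i‖) := by
      have := (hk p).comp_injective hinj
      exact this
    apply Summable.of_nonneg_of_le (fun i => by positivity) _ h1
    intro i
    have h2 : (i:ℝ)^p ≤ (1 + i + i)^p := by
      apply pow_le_pow_left₀ (by positivity) (by linarith [Nat.cast_nonneg (α := ℝ) i])
    calc ‖k i i‖ * (i:ℝ)^p ≤ ‖k i i‖ * (1+i+i)^p :=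
          mul_le_mul_of_nonneg_left h2 (norm_nonneg _)
      _ = _ := mul_comm _ _
  have hkr : ∀ r : ℕ, Summable (fun i : ℕ => k i i * (i:ℂ)^r) := by
    intro r
    apply Summable.of_norm
    apply Summable.of_nonneg_of_le (fun i => norm_nonneg _) _ (hdiag r)
    intro i
    simp [norm_mul, norm_pow, Complex.norm_natCast]
  intro N
  refine ⟨1, one_pos, (∑' i : ℕ, ‖k i i‖ * (i:ℝ)^(N+1)), ?_⟩
  intro t ht _
  set E : ℕ → ℝ := fun i =>
    Real.exp (-(t*i)) - ∑ r ∈ Finset.range (N+1), (-(t*i))^r / r.factorial with hE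
  have hEbound : ∀ i : ℕ, |E i| ≤ t^(N+1) * (i:ℝ)^(N+1) := by
    intro i
    have h0 : (0:ℝ) ≤ t * i := by positivity
    calc |E i| ≤ (t*i)^(N+1) := exp_neg_taylor_bound N (t*i) h0
      _ = t^(N+1) * (i:ℝ)^(N+1) := mul_pow _ _ _
  -- summability of the two complex series
  have hsum_exp : Summable (fun i : ℕ => k i i * (Real.exp (-t * i) : ℂ)) := by
    apply Summable.of_norm
    apply Summable.of_nonneg_of_le (fun i => norm_nonneg _) _ (by simpa using hdiag 0)
    intro i
    have hexp : Real.exp (-t * i) ≤ 1 := by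
      calc Real.exp (-t * i) ≤ Real.exp 0 := Real.exp_le_exp.mpr (by nlinarith [mul_nonneg ht.le (Nat.cast_nonneg (α:=ℝ) i)])
        _ = 1 := Real.exp_zero
    calc ‖k i i * (Real.exp (-t * i) : ℂ)‖ = ‖k i i‖ * Real.exp (-t * i) := by
          rw [norm_mul, Complex.norm_real, Real.norm_eq_abs,
            abs_of_pos (Real.exp_pos _)]
      _ ≤ ‖k i i‖ * 1 :=
          mul_le_mul_of_nonneg_left hexp (norm_nonneg _)
      _ = ‖k i i‖ := mul_one _
  have hsum_r : ∀ r : ℕ, Summable (fun i : ℕ =>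
      (((-1 : ℂ)^r / r.factorial) * (k i i * (i:ℂ)^r)) * (t:ℂ)^r) :=
    fun r => ((hkr r).mul_left _).mul_right _
  have hsum_h : Summable (fun i : ℕ => ∑ r ∈ Finset.range (N+1),
      (((-1 : ℂ)^r / r.factorial) * (k i i * (i:ℂ)^r)) * (t:ℂ)^r) :=
    summable_sum (fun r _ => hsum_r r)
  -- rewrite the partial sum as a tsum
  have hA : ∑ r ∈ Finset.range (N + 1),
      (((-1 : ℂ) ^ r / (r.factorial : ℂ)) * ∑' i : ℕ, k i i * (i : ℂ) ^ r) * (t : ℂ) ^ r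
      = ∑' i : ℕ, ∑ r ∈ Finset.range (N+1),
      (((-1 : ℂ)^r / r.factorial) * (k i i * (i:ℂ)^r)) * (t:ℂ)^r := by
    rw [Summable.tsum_finsetSum (fun r _ => hsum_r r)]
    apply Finset.sum_congr rfl
    intro r _
    rw [← tsum_mul_left, ← tsum_mul_right]
  have hB : (∑' i : ℕ, k i i * (Real.exp (-t * i) : ℂ)) - ∑ r ∈ Finset.range (N + 1),
      (((-1 : ℂ) ^ r / (r.factorial : ℂ)) * ∑' i : ℕ, k i i * (i : ℂ) ^ r) * (t : ℂ) ^ r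
      = ∑' i : ℕ, k i i * ((E i : ℝ) : ℂ) := by
    rw [hA, ← Summable.tsum_sub hsum_exp hsum_h]
    apply tsum_congr
    intro i
    rw [hE]
    push_cast
    rw [mul_sub, Finset.mul_sum, neg_mul]
    congr 1
    apply Finset.sum_congr rfl
    intro r _
    rw [show (-((t:ℂ) * (i:ℂ)))^r = (-1)^r * ((t:ℂ)^r * (i:ℂ)^r) from by
      rw [neg_pow, mul_pow]]
    ring
  have hnorm : Summable (fun i : ℕ => ‖k i i * ((E i : ℝ) : ℂ)‖) := by
    apply Summable.of_nonneg_of_le (fun i => norm_nonneg _) _ ((hdiag (N+1)).mul_left (t^(N+1)))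
    intro i
    calc ‖k i i * ((E i : ℝ) : ℂ)‖ = ‖k i i‖ * |E i| := by
          rw [norm_mul, Complex.norm_real, Real.norm_eq_abs]
      _ ≤ ‖k i i‖ * (t^(N+1) * (i:ℝ)^(N+1)) :=
          mul_le_mul_of_nonneg_left (hEbound i) (norm_nonneg _)
      _ = t^(N+1) * (‖k i i‖ * (i:ℝ)^(N+1)) := by ring
  rw [hB]
  calc ‖∑' i : ℕ, k i i * ((E i : ℝ) : ℂ)‖
      ≤ ∑' i : ℕ, ‖k i i * ((E i : ℝ) : ℂ)‖ := norm_tsum_le_tsum_norm hnorm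
    _ ≤ ∑' i : ℕ, t^(N+1) * (‖k i i‖ * (i:ℝ)^(N+1)) := by
        apply Summable.tsum_le_tsum _ hnorm ((hdiag (N+1)).mul_left (t^(N+1)))
        intro i
        calc ‖k i i * ((E i : ℝ) : ℂ)‖ = ‖k i i‖ * |E i| := by
              rw [norm_mul, Complex.norm_real, Real.norm_eq_abs]
          _ ≤ ‖k i i‖ * (t^(N+1) * (i:ℝ)^(N+1)) :=
              mul_le_mul_of_nonneg_left (hEbound i) (norm_nonneg _)
          _ = t^(N+1) * (‖k i i‖ * (i:ℝ)^(N+1)) := by ring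
    _ = t^(N+1) * ∑' i : ℕ, ‖k i i‖ * (i:ℝ)^(N+1) := tsum_mul_left
    _ = (∑' i : ℕ, ‖k i i‖ * (i:ℝ)^(N+1)) * t^(N+1) := mul_comm _ _
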